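/- Let V = ⊕_a V^a be an o-good graded quadratic space over an algebraically closed field of characteristic 2, and let β_ξ ∈ 𝔖(V)_2 be a symplectic form with β_ξ(V^a,V^b)=0 for a+b ≠ −2, with associated maps A : V^a → V^{a+2} (a ≠ −2) defined by β(Ax^a, x^{-a-2}) = β_ξ(x^a, x^{-a-2}). Let R = Rad(Q) ⊆ V^0, let m̄ be the unique integer with A^{m̄}R ≠ 0 and A^{m̄+1}R = 0, let v̄_{m̄} ∈ R satisfy Q(v̄_{m̄}) = 1, and v̄_i = A^{m̄−i}v̄_{m̄}. Suppose m̄ > 0 and define ū_0 ∈ V^{-2m̄} with β(ū_0, v̄_0) = 1, ū_i = A^i ū_0, and subspaces W̄^a as follows: W̄^{-2i} = {v ∈ V^{-2i} : β(v, v̄_{m̄−i}) = 0}, W̄^{2i} = {v ∈ V^{2i} : β(v, ū_{m̄−i}) = 0} for i ∈ [1,m̄], W̄^0 = {v ∈ V^0 : β_ξ(v, ū_{m̄−1}) = 0}, and W̄^a = V^a otherwise. Then A(W̄^a) ⊆ W̄^{a+2} for all a ≠ −2. -/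
import Mathlib


/-- Section 3.2: with `m̄ > 0`, the subspaces `W̄^a` built from `v̄_i = A^{m̄-i} v̄_m̄`
(`v̄_m̄` the radical vector with `Q = 1`) and `ū_i = A^i ū_0` satisfy
`A(W̄^a) ⊆ W̄^{a+2}` for all `a ≠ -2`. -/
theorem stmt_11 {k V : Type*} [Field k] [CharP k 2] [IsAlgClosed k]
    [AddCommGroup V] [Module k V] [FiniteDimensional k V]
    (Vg : ℤ → Submodule k V) (hV : DirectSum.IsInternal Vg)
    (Q : QuadraticForm k V)
    (hortho : ∀ a b : ℤ, a + b ≠ 0 → ∀ x ∈ Vg a, ∀ y ∈ Vg b, QuadraticMap.polar Q x y = 0)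
    (hQzero : ∀ a : ℤ, a ≠ 0 → ∀ x ∈ Vg a, Q x = 0)
    (Bξ : LinearMap.BilinForm k V) (hBalt : Bξ.IsAlt)
    (hB2 : ∀ a b : ℤ, a + b ≠ -2 → ∀ x ∈ Vg a, ∀ y ∈ Vg b, Bξ x y = 0)
    (A : V →ₗ[k] V)
    (hAmap : ∀ a : ℤ, a ≠ -2 → ∀ x ∈ Vg a, A x ∈ Vg (a + 2))
    (hAdef : ∀ a : ℤ, a ≠ -2 → ∀ x ∈ Vg a, ∀ y ∈ Vg (-a - 2),
      QuadraticMap.polar Q (A x) y = Bξ x y)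
    (mb : ℕ) (hmb : 0 < mb)
    (r : V) (hrrad : ∀ w, QuadraticMap.polar Q r w = 0) (hr0 : r ∈ Vg 0) (hQr : Q r = 1)
    (hAr : (A ^ mb) r ≠ 0) (hAr1 : (A ^ (mb + 1)) r = 0)
    (u0 : V) (hu0 : u0 ∈ Vg (-(2 * (mb : ℤ))))
    (hu0v : QuadraticMap.polar Q u0 ((A ^ mb) r) = 1)
    (vb ub : ℕ → V) (hvb : ∀ i, vb i = (A ^ (mb - i)) r) (hub : ∀ i, ub i = (A ^ i) u0)
    (Wb : ℤ → Set V)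
    (hWneg : ∀ i : ℕ, 1 ≤ i → i ≤ mb → ∀ v : V,
      v ∈ Wb (-(2 * (i : ℤ))) ↔
        v ∈ Vg (-(2 * (i : ℤ))) ∧ QuadraticMap.polar Q v (vb (mb - i)) = 0)
    (hWpos : ∀ i : ℕ, 1 ≤ i → i ≤ mb → ∀ v : V,
      v ∈ Wb (2 * (i : ℤ)) ↔
        v ∈ Vg (2 * (i : ℤ)) ∧ QuadraticMap.polar Q v (ub (mb - i)) = 0)
    (hW0 : ∀ v : V, v ∈ Wb 0 ↔ v ∈ Vg 0 ∧ Bξ v (ub (mb - 1)) = 0)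
    (hWelse : ∀ a : ℤ, (Odd a ∨ a < -(2 * (mb : ℤ)) ∨ 2 * (mb : ℤ) < a) →
      Wb a = (Vg a : Set V)) :
    ∀ a : ℤ, a ≠ -2 → ∀ v ∈ Wb a, A v ∈ Wb (a + 2) := by
  -- symmetry of Bξ in characteristic 2
  have hBsymm : ∀ x y : V, Bξ x y = Bξ y x := by
    intro x y
    rw [← LinearMap.IsAlt.neg hBalt x y, CharTwo.neg_eq]
  -- membership of A^j r
  have hAr_mem : ∀ j : ℕ, (A ^ j) r ∈ Vg (2 * (j : ℤ)) := by
    intro j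
    induction j with
    | zero => simpa using hr0
    | succ n ih =>
      have h := hAmap (2 * (n : ℤ)) (by omega) _ ih
      have e : (2 * ((n + 1 : ℕ) : ℤ)) = 2 * (n : ℤ) + 2 := by push_cast; ring
      rw [e, pow_succ', Module.End.mul_apply]
      exact h
  -- membership of A^j u0 for j + 1 ≤ mb
  have hAu_mem : ∀ j : ℕ, j + 1 ≤ mb → (A ^ j) u0 ∈ Vg (-(2 * (mb : ℤ)) + 2 * (j : ℤ)) := by
    intro j
    induction j with
    | zero => intro _; simpa using hu0
    | succ n ih =>
      intro hn
      have h := hAmap (-(2 * (mb : ℤ)) + 2 * (n : ℤ)) (by omega) _ (ih (by omega))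
      have e : (-(2 * (mb : ℤ)) + 2 * ((n + 1 : ℕ) : ℤ))
          = -(2 * (mb : ℤ)) + 2 * (n : ℤ) + 2 := by push_cast; ring
      rw [e, pow_succ', Module.End.mul_apply]
      exact h
  -- the swap lemma
  have swap : ∀ a : ℤ, a ≠ -2 → a ≠ 0 → ∀ v ∈ Vg a, ∀ w ∈ Vg (-a - 2),
      QuadraticMap.polar Q (A v) w = QuadraticMap.polar Q v (A w) := by
    intro a ha ha0 v hv w hw
    have hv' : v ∈ Vg (-(-a - 2) - 2) := by rw [show -(-a - 2) - 2 = a by ring]; exact hv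
    rw [hAdef a ha v hv w hw, hBsymm, ← hAdef (-a - 2) (by omega) w hw v hv',
      QuadraticMap.polar_comm]
  intro a ha v hv
  rcases Int.even_or_odd a with ⟨i, rfl⟩ | hodd
  · -- even case, a = i + i
    rcases lt_trichotomy i 0 with hi | rfl | hi
    · -- i < 0
      rcases lt_trichotomy i (-(mb : ℤ) - 1) with h1 | rfl | h1
      · -- far below: both sides are Vg
        rw [hWelse (i + i) (Or.inr (Or.inl (by omega)))] at hv
        rw [hWelse (i + i + 2) (Or.inr (Or.inl (by omega)))]
        exact hAmap (i + i) ha v hv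
      · -- i = -mb - 1 : target is W^{-2mb}
        rw [hWelse _ (Or.inr (Or.inl (by omega)))] at hv
        rw [show -(mb : ℤ) - 1 + (-(mb : ℤ) - 1) + 2 = -(2 * (mb : ℤ)) by ring]
        refine (hWneg mb (by omega) le_rfl _).mpr ⟨?_, ?_⟩
        · have h := hAmap _ ha v hv
          rwa [show -(mb : ℤ) - 1 + (-(mb : ℤ) - 1) + 2 = -(2 * (mb : ℤ)) by ring] at h
        · rw [hvb, Nat.sub_self, Nat.sub_zero]
          have hw : (A ^ mb) r ∈ Vg (-(-(mb : ℤ) - 1 + (-(mb : ℤ) - 1)) - 2) := by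
            rw [show -(-(mb : ℤ) - 1 + (-(mb : ℤ) - 1)) - 2 = 2 * (mb : ℤ) by ring]
            exact hAr_mem mb
          rw [swap _ ha (by omega) v hv _ hw, ← Module.End.mul_apply, ← pow_succ', hAr1,
            QuadraticMap.polar_zero_right]
      · -- -mb ≤ i ≤ -1 ; since a ≠ -2, i ≤ -2
        set j : ℕ := (-i).toNat with hjdef
        have hj : (j : ℤ) = -i := Int.toNat_of_nonneg (by omega)
        have hj2 : 2 ≤ j := by omega
        have hjm : j ≤ mb := by omega
        rw [show i + i = -(2 * (j : ℤ)) by omega] at hv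
        obtain ⟨hvV, hvβ⟩ := (hWneg j (by omega) hjm v).mp hv
        rw [show i + i + 2 = -(2 * ((j - 1 : ℕ) : ℤ)) by omega]
        refine (hWneg (j - 1) (by omega) (by omega) _).mpr ⟨?_, ?_⟩
        · have h := hAmap _ (by omega : -(2 * (j : ℤ)) ≠ -2) v hvV
          rwa [show -(2 * (j : ℤ)) + 2 = -(2 * ((j - 1 : ℕ) : ℤ)) by omega] at h
        · rw [hvb, show mb - (j - 1) = mb - j + 1 by omega,
            show mb - (mb - j + 1) = j - 1 by omega]
          have hw : (A ^ (j - 1)) r ∈ Vg (-(-(2 * (j : ℤ))) - 2) := by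
            rw [show -(-(2 * (j : ℤ))) - 2 = 2 * ((j - 1 : ℕ) : ℤ) by omega]
            exact hAr_mem (j - 1)
          rw [swap _ (by omega) (by omega) v hvV _ hw, ← Module.End.mul_apply, ← pow_succ',
            show j - 1 + 1 = j by omega]
          rw [hvb, show mb - (mb - j) = j by omega] at hvβ
          exact hvβ
    · -- a = 0
      obtain ⟨hvV, hvB⟩ := (hW0 v).mp hv
      rw [show (0 : ℤ) + 0 + 2 = 2 * ((1 : ℕ) : ℤ) by norm_num]
      refine (hWpos 1 le_rfl hmb _).mpr ⟨?_, ?_⟩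
      · have h := hAmap 0 (by omega) v hvV
        rwa [show (0 : ℤ) + 2 = 2 * ((1 : ℕ) : ℤ) by norm_num] at h
      · rw [hub]
        have hw : (A ^ (mb - 1)) u0 ∈ Vg (-(0 : ℤ) - 2) := by
          have := hAu_mem (mb - 1) (by omega)
          rwa [show (-(2 * (mb : ℤ)) + 2 * ((mb - 1 : ℕ) : ℤ)) = -(0 : ℤ) - 2 by omega] at this
        rw [hAdef 0 (by omega) v hvV _ hw, ← hub]
        exact hvB
    · -- i > 0
      rcases lt_trichotomy i (mb : ℤ) with h1 | rfl | h1
      · -- 1 ≤ i ≤ mb - 1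
        set j : ℕ := i.toNat with hjdef
        have hj : (j : ℤ) = i := Int.toNat_of_nonneg (by omega)
        have hj1 : 1 ≤ j := by omega
        have hjm : j + 1 ≤ mb := by omega
        rw [show i + i = 2 * (j : ℤ) by omega] at hv
        obtain ⟨hvV, hvβ⟩ := (hWpos j hj1 (by omega) v).mp hv
        rw [show i + i + 2 = 2 * ((j + 1 : ℕ) : ℤ) by omega]
        refine (hWpos (j + 1) (by omega) hjm _).mpr ⟨?_, ?_⟩
        · have h := hAmap _ (by omega : 2 * (j : ℤ) ≠ -2) v hvV
          rwa [show 2 * (j : ℤ) + 2 = 2 * ((j + 1 : ℕ) : ℤ) by omega] at h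
        · rw [hub, show mb - (j + 1) = mb - j - 1 by omega]
          have hw : (A ^ (mb - j - 1)) u0 ∈ Vg (-(2 * (j : ℤ)) - 2) := by
            have := hAu_mem (mb - j - 1) (by omega)
            rwa [show (-(2 * (mb : ℤ)) + 2 * ((mb - j - 1 : ℕ) : ℤ))
              = -(2 * (j : ℤ)) - 2 by omega] at this
          rw [swap _ (by omega) (by omega) v hvV _ hw, ← Module.End.mul_apply, ← pow_succ',
            show mb - j - 1 + 1 = mb - j by omega]
          rw [hub] at hvβ
          exact hvβ
      · -- i = mb
        obtain ⟨hvV, _⟩ := (hWpos mb hmb le_rfl v).mp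
          (by rwa [show (mb : ℤ) + (mb : ℤ) = 2 * (mb : ℤ) by ring] at hv)
        rw [hWelse ((mb : ℤ) + (mb : ℤ) + 2) (Or.inr (Or.inr (by omega)))]
        have h := hAmap _ (by omega : 2 * (mb : ℤ) ≠ -2) v hvV
        rwa [show 2 * (mb : ℤ) + 2 = (mb : ℤ) + (mb : ℤ) + 2 by ring] at h
      · -- i > mb
        rw [hWelse (i + i) (Or.inr (Or.inr (by omega)))] at hv
        rw [hWelse (i + i + 2) (Or.inr (Or.inr (by omega)))]
        exact hAmap (i + i) ha v hv
  · -- odd case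
    rw [hWelse a (Or.inl hodd)] at hv
    rw [hWelse (a + 2) (Or.inl (by obtain ⟨n, rfl⟩ := hodd; exact ⟨n + 1, by ring⟩))]
    exact hAmap a ha v hv
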